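/- If e: A → ∏_{i=1}^n A_i is a subdirect product-essential embedding and η_i is the kernel of the i-th projection restricted to A, then ⋀_{i=1}^n η_i = 0_A, and whenever φ_i ≥ η_i for all i with ⋀_{i=1}^n φ_i = 0_A, it follows that φ_i = η_i for all i. -/
import Mathlib


/-- An algebraic signature: a type of operation symbols with finite arities. -/
structure Signature where
  ops : Type
  arity : ops → ℕ

/-- An algebra for a signature. -/
structure SAlgebra (S : Signature) where
  carrier : Type
  interp : (o : S.ops) → (Fin (S.arity o) → carrier) → carrier

namespace SAlgebra

variable {S : Signature}

/-- Binary product of algebras. -/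
def prod (A B : SAlgebra S) : SAlgebra S where
  carrier := A.carrier × B.carrier
  interp o x := (A.interp o fun i => (x i).1, B.interp o fun i => (x i).2)

/-- Product of a family of algebras. -/
def pi {ι : Type} (A : ι → SAlgebra S) : SAlgebra S where
  carrier := ∀ i, (A i).carrier
  interp o x i := (A i).interp o fun j => x j i

end SAlgebra

/-- Homomorphisms of algebras. -/
structure SHom {S : Signature} (A B : SAlgebra S) where
  toFun : A.carrier → B.carrier
  map : ∀ (o : S.ops) (x : Fin (S.arity o) → A.carrier),
    toFun (A.interp o x) = B.interp o fun i => toFun (x i)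

namespace SHom

variable {S : Signature}

/-- Composition of homomorphisms. -/
def comp {A B C : SAlgebra S} (g : SHom B C) (f : SHom A B) : SHom A C where
  toFun := g.toFun ∘ f.toFun
  map o x := by simp [Function.comp, f.map, g.map]

/-- The `i`-th projection of a product. -/
def proj {ι : Type} (A : ι → SAlgebra S) (i : ι) : SHom (SAlgebra.pi A) (A i) where
  toFun x := x i
  map _ _ := rfl

end SHom

/-- Congruences of an algebra. -/
structure SCon {S : Signature} (A : SAlgebra S) where
  r : A.carrier → A.carrier → Prop
  iseqv : Equivalence r
  compat : ∀ (o : S.ops) (x y : Fin (S.arity o) → A.carrier),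
    (∀ i, r (x i) (y i)) → r (A.interp o x) (A.interp o y)

namespace SCon

variable {S : Signature} {A : SAlgebra S}

instance : PartialOrder (SCon A) where
  le c d := ∀ x y, c.r x y → d.r x y
  le_refl _ _ _ h := h
  le_trans _ _ _ h h' x y hx := h' x y (h x y hx)
  le_antisymm a b h h' := by
    cases a; cases b
    have : ∀ x y : A.carrier, _ ↔ _ := fun x y => Iff.intro (h x y) (h' x y)
    simp only [SCon.mk.injEq]
    funext x y
    exact propext (this x y)

instance : InfSet (SCon A) :=
  ⟨fun s =>
    { r := fun x y => ∀ c ∈ s, c.r x y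
      iseqv := ⟨fun x c _ => c.iseqv.refl x, fun h c hc => c.iseqv.symm (h c hc),
        fun h1 h2 c hc => c.iseqv.trans (h1 c hc) (h2 c hc)⟩
      compat := fun o x y h c hc => c.compat o x y fun i => h i c hc }⟩

instance : CompleteLattice (SCon A) :=
  completeLatticeOfInf _ (fun s =>
    ⟨fun c hc x y h => h c hc, fun b hb x y h c hc => hb hc x y h⟩)

/-- Restriction (inverse image) of a congruence along a homomorphism. -/
def comap {B : SAlgebra S} (f : SHom A B) (θ : SCon B) : SCon A where
  r x y := θ.r (f.toFun x) (f.toFun y)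
  iseqv := ⟨fun _ => θ.iseqv.refl _, θ.iseqv.symm, θ.iseqv.trans⟩
  compat o x y h := by
    show θ.r (f.toFun (A.interp o x)) (f.toFun (A.interp o y))
    rw [f.map, f.map]
    exact θ.compat o _ _ h

/-- Product of two congruences. -/
def prodCon {A B : SAlgebra S} (φ : SCon A) (ψ : SCon B) : SCon (A.prod B) where
  r x y := φ.r x.1 y.1 ∧ ψ.r x.2 y.2
  iseqv := ⟨fun _ => ⟨φ.iseqv.refl _, ψ.iseqv.refl _⟩,
    fun h => ⟨φ.iseqv.symm h.1, ψ.iseqv.symm h.2⟩,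
    fun h h' => ⟨φ.iseqv.trans h.1 h'.1, ψ.iseqv.trans h.2 h'.2⟩⟩
  compat o x y h := ⟨φ.compat o _ _ fun i => (h i).1, ψ.compat o _ _ fun i => (h i).2⟩

/-- Product of a family of congruences. -/
def piCon {ι : Type} {A : ι → SAlgebra S} (φ : ∀ i, SCon (A i)) : SCon (SAlgebra.pi A) where
  r x y := ∀ i, (φ i).r (x i) (y i)
  iseqv := ⟨fun _ i => (φ i).iseqv.refl _, fun h i => (φ i).iseqv.symm (h i),
    fun h h' i => (φ i).iseqv.trans (h i) (h' i)⟩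
  compat o x y h i := (φ i).compat o _ _ fun j => h j i

end SCon

/-- Terms in `n` variables over a signature. -/
inductive STerm (S : Signature) : ℕ → Type where
  | var : {n : ℕ} → Fin n → STerm S n
  | app : {n : ℕ} → (o : S.ops) → (Fin (S.arity o) → STerm S n) → STerm S n

/-- Evaluation of a term in an algebra. -/
def STerm.eval {S : Signature} (A : SAlgebra S) {n : ℕ} : STerm S n → (Fin n → A.carrier) → A.carrier
  | .var i, x => x i
  | .app o t, x => A.interp o fun j => (t j).eval A x

/-- The term-condition centralizer relation `C(α, β; δ)`. -/
def Centralizes {S : Signature} (A : SAlgebra S) (α β δ : SCon A) : Prop :=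
  ∀ (n m : ℕ) (t : STerm S (n + m)) (a b : Fin n → A.carrier) (u v : Fin m → A.carrier),
    (∀ i, α.r (a i) (b i)) → (∀ j, β.r (u j) (v j)) →
    δ.r (t.eval A (Fin.append a u)) (t.eval A (Fin.append a v)) →
    δ.r (t.eval A (Fin.append b u)) (t.eval A (Fin.append b v))

/-- The commutator `[α, β]`: the least congruence `δ` with `C(α, β; δ)`. -/
def conCommutator {S : Signature} (A : SAlgebra S) (α β : SCon A) : SCon A :=
  sInf {δ | Centralizes A α β δ}

/-- The center of an algebra: the largest central congruence. -/
def conCenter {S : Signature} (A : SAlgebra S) : SCon A :=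
  sSup {θ | conCommutator A θ ⊤ = ⊥}

/-- A class of algebras is a variety iff it is closed under subalgebras
(isomorphic copies included), homomorphic images and products. -/
def IsVariety {S : Signature} (V : SAlgebra S → Prop) : Prop :=
  (∀ (A B : SAlgebra S) (e : SHom A B), Function.Injective e.toFun → V B → V A) ∧
  (∀ (A B : SAlgebra S) (p : SHom A B), Function.Surjective p.toFun → V A → V B) ∧
  (∀ (ι : Type) (A : ι → SAlgebra S), (∀ i, V (A i)) → V (SAlgebra.pi A))

/-- A congruence modular variety. -/
def IsCongruenceModularVariety {S : Signature} (V : SAlgebra S → Prop) : Prop :=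
  IsVariety V ∧ ∀ A : SAlgebra S, V A → IsModularLattice (SCon A)

/-- A Gumm difference term for the class `V`:  `d(x,y,y) = x` holds identically,
and `d(x,x,y) = y` whenever `x θ y` for an abelian congruence `θ`. -/
def IsGummDifferenceTerm {S : Signature} (V : SAlgebra S → Prop) (d : STerm S 3) : Prop :=
  (∀ A : SAlgebra S, V A → ∀ x y : A.carrier, d.eval A ![x, y, y] = x) ∧
  (∀ A : SAlgebra S, V A → ∀ θ : SCon A, conCommutator A θ θ = ⊥ →
    ∀ x y : A.carrier, θ.r x y → d.eval A ![x, x, y] = y)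

/-- `R` is an absolute retract in `V`: every embedding of `R` into a member of `V`
admits a retraction. -/
def IsAbsoluteRetract {S : Signature} (V : SAlgebra S → Prop) (R : SAlgebra S) : Prop :=
  ∀ A : SAlgebra S, V A → ∀ e : SHom R A, Function.Injective e.toFun →
    ∃ p : SHom A R, ∀ x, p.toFun (e.toFun x) = x

/-- An embedding is essential iff every congruence of the codomain restricting
trivially is trivial. -/
def IsEssential {S : Signature} {A B : SAlgebra S} (e : SHom A B) : Prop :=
  ∀ θ : SCon B, SCon.comap e θ = ⊥ → θ = ⊥

/-- A congruence `α` is dense: any congruence meeting it trivially is trivial. -/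
def DenseCon {S : Signature} {A : SAlgebra S} (α : SCon A) : Prop :=
  ∀ θ : SCon A, θ ⊓ α = ⊥ → θ = ⊥

/-- The setoid underlying a congruence. -/
def SCon.setoid {S : Signature} {A : SAlgebra S} (θ : SCon A) : Setoid A.carrier :=
  ⟨θ.r, θ.iseqv⟩

/-- Quotient algebra. -/
noncomputable def SAlgebra.quot {S : Signature} (A : SAlgebra S) (θ : SCon A) : SAlgebra S where
  carrier := Quotient θ.setoid
  interp o x := Quotient.mk θ.setoid (A.interp o fun i => (x i).out)

theorem SCon.out_rel {S : Signature} {A : SAlgebra S} (θ : SCon A) (a : A.carrier) :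
    θ.r (Quotient.out (Quotient.mk θ.setoid a)) a :=
  @Quotient.exact _ θ.setoid _ _ (Quotient.out_eq _)

/-- The canonical quotient homomorphism. -/
def SHom.quotHom {S : Signature} (A : SAlgebra S) (θ : SCon A) : SHom A (A.quot θ) where
  toFun := Quotient.mk θ.setoid
  map o x := Quotient.sound (θ.compat o _ _ fun i => θ.iseqv.symm (θ.out_rel (x i)))

/-- Product map of a family of homomorphisms. -/
def SHom.piMap {S : Signature} {ι : Type} {A B : ι → SAlgebra S} (f : ∀ i, SHom (A i) (B i)) :
    SHom (SAlgebra.pi A) (SAlgebra.pi B) where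
  toFun x i := (f i).toFun (x i)
  map o x := funext fun i => (f i).map o fun j => x j i

/-- The congruence `φ/θ` on the quotient `A/θ`, for `θ ≤ φ`. -/
def SCon.quotCon {S : Signature} {A : SAlgebra S} (θ φ : SCon A) (h : θ ≤ φ) :
    SCon (A.quot θ) where
  r a b := φ.r a.out b.out
  iseqv := ⟨fun _ => φ.iseqv.refl _, φ.iseqv.symm, φ.iseqv.trans⟩
  compat o x y hxy := by
    have hx := h _ _ (θ.out_rel (A.interp o fun i => (x i).out))
    have hy := h _ _ (θ.out_rel (A.interp o fun i => (y i).out))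
    exact φ.iseqv.trans hx (φ.iseqv.trans (φ.compat o _ _ hxy) (φ.iseqv.symm hy))

/-- Finitely subdirectly irreducible: `⊥` is meet irreducible in the congruence lattice. -/
def IsFSI {S : Signature} (A : SAlgebra S) : Prop :=
  ∀ θ φ : SCon A, θ ⊓ φ = ⊥ → θ = ⊥ ∨ φ = ⊥

/-- Subdirectly irreducible: the congruence lattice has a monolith. -/
def IsSubdirectlyIrreducible {S : Signature} (A : SAlgebra S) : Prop :=
  ∃ μ : SCon A, μ ≠ ⊥ ∧ ∀ θ : SCon A, θ ≠ ⊥ → μ ≤ θ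

/-- The diagonal (equality) congruence. -/
def SCon.eqCon {S : Signature} (A : SAlgebra S) : SCon A where
  r := Eq
  iseqv := ⟨fun _ => rfl, Eq.symm, Eq.trans⟩
  compat o x y h := by
    have : x = y := funext h
    rw [this]

theorem SCon.bot_r_iff {S : Signature} {A : SAlgebra S} (x y : A.carrier) :
    (⊥ : SCon A).r x y ↔ x = y := by
  constructor
  · exact fun h => (bot_le : (⊥ : SCon A) ≤ SCon.eqCon A) x y h
  · rintro rfl; exact (⊥ : SCon A).iseqv.refl x

theorem SCon.eq_bot_iff' {S : Signature} {A : SAlgebra S} (θ : SCon A) :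
    θ = ⊥ ↔ ∀ x y, θ.r x y → x = y := by
  constructor
  · rintro rfl; exact fun x y h => (SCon.bot_r_iff x y).1 h
  · intro h
    refine le_antisymm (fun x y hxy => ?_) bot_le
    exact (SCon.bot_r_iff x y).2 (h x y hxy)

theorem SCon.iInf_r_iff {S : Signature} {A : SAlgebra S} {ι : Type} (φ : ι → SCon A)
    (x y : A.carrier) : (⨅ i, φ i).r x y ↔ ∀ i, (φ i).r x y := by
  have : (⨅ i, φ i) = sInf (Set.range φ) := rfl
  rw [this]
  show (∀ c ∈ Set.range φ, c.r x y) ↔ _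
  constructor
  · exact fun h i => h (φ i) ⟨i, rfl⟩
  · rintro h c ⟨i, rfl⟩; exact h i

/-- For a subdirect product-essential embedding `e : A → ∏ Aᵢ` with projection kernels
`ηᵢ`, we have `⋀ ηᵢ = 0` and: whenever `φᵢ ≥ ηᵢ` with `⋀ φᵢ = 0`, then `φᵢ = ηᵢ` for
all `i`. -/
theorem subdirect_product_essential_kernels {S : Signature}
    (n : ℕ) (A : SAlgebra S) (Ai : Fin n → SAlgebra S)
    (e : SHom A (SAlgebra.pi Ai)) (hinj : Function.Injective e.toFun)
    (hsub : ∀ i, Function.Surjective fun x => e.toFun x i)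
    (hpe : ∀ φ : ∀ i, SCon (Ai i), SCon.comap e (SCon.piCon φ) = ⊥ → ∀ i, φ i = ⊥)
    (η : Fin n → SCon A)
    (hη : ∀ (i : Fin n) (x y : A.carrier), (η i).r x y ↔ e.toFun x i = e.toFun y i) :
    (⨅ i, η i) = ⊥ ∧
      ∀ φ : Fin n → SCon A, (∀ i, η i ≤ φ i) → (⨅ i, φ i) = ⊥ → ∀ i, φ i = η i := by
  constructor
  · rw [SCon.eq_bot_iff']
    intro x y h
    apply hinj
    funext i
    exact (hη i x y).1 ((SCon.iInf_r_iff η x y).1 h i)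
  · intro φ hge hinf
    -- push each φ i forward along the surjection onto Ai i
    have key : ∀ i (x y : A.carrier), e.toFun x i = e.toFun y i → (φ i).r x y :=
      fun i x y h => hge i x y ((hη i x y).2 h)
    let ψ : ∀ i, SCon (Ai i) := fun i =>
      { r := fun a b => ∃ x y, e.toFun x i = a ∧ e.toFun y i = b ∧ (φ i).r x y
        iseqv := by
          constructor
          · intro a
            obtain ⟨x, hx⟩ := hsub i a
            exact ⟨x, x, hx, hx, (φ i).iseqv.refl x⟩
          · rintro a b ⟨x, y, hx, hy, hxy⟩
            exact ⟨y, x, hy, hx, (φ i).iseqv.symm hxy⟩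
          · rintro a b c ⟨x, y, hx, hy, hxy⟩ ⟨y', z, hy', hz, hyz⟩
            refine ⟨x, z, hx, hz, (φ i).iseqv.trans hxy ((φ i).iseqv.trans ?_ hyz)⟩
            exact key i y y' (hy.trans hy'.symm)
        compat := by
          intro o x y h
          choose u v hu hv huv using h
          refine ⟨A.interp o u, A.interp o v, ?_, ?_, (φ i).compat o u v huv⟩
          · rw [e.map]; exact congrArg ((Ai i).interp o) (funext fun j => hu j)
          · rw [e.map]; exact congrArg ((Ai i).interp o) (funext fun j => hv j) }
    have hψ : ∀ i (x y : A.carrier), (ψ i).r (e.toFun x i) (e.toFun y i) ↔ (φ i).r x y := by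
      intro i x y
      constructor
      · rintro ⟨x', y', hx', hy', hxy⟩
        exact (φ i).iseqv.trans (key i x x' hx'.symm)
          ((φ i).iseqv.trans hxy (key i y' y hy'))
      · intro h; exact ⟨x, y, rfl, rfl, h⟩
    have hcomap : SCon.comap e (SCon.piCon ψ) = ⊥ := by
      rw [SCon.eq_bot_iff']
      intro x y h
      have : ∀ i, (φ i).r x y := fun i => (hψ i x y).1 (h i)
      have hb : (⨅ i, φ i).r x y := (SCon.iInf_r_iff φ x y).2 this
      rw [hinf] at hb
      exact (SCon.bot_r_iff x y).1 hb
    have hbot := hpe ψ hcomap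
    intro i
    refine le_antisymm (fun x y h => ?_) (hge i)
    have : (ψ i).r (e.toFun x i) (e.toFun y i) := (hψ i x y).2 h
    rw [hbot i] at this
    exact (hη i x y).2 ((SCon.bot_r_iff _ _).1 this)
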